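/- Let D be the open unit ball in ℝⁿ, n ≥ 2, and let a₁,…,a_p be p distinct points of D. Then X(p) = D \ {a₁,…,a_p} is p-disconnected near infinity. -/

import Mathlib

open Set Metric

section Aux
variable {Y : Type*} [TopologicalSpace Y] {m : ℕ}

lemma aux_index_unique (D : Fin m → Set Y) (hopen : ∀ i, IsOpen (D i))
    (hdisj : ∀ i j, i ≠ j → D i ∩ D j = ∅) (hcover : ∀ y : Y, ∃ i, y ∈ D i)
    {s : Set Y} (hs : IsPreconnected s) {y z : Y} {i j : Fin m}
    (hy : y ∈ s) (hz : z ∈ s) (hyi : y ∈ D i) (hzj : z ∈ D j) : i = j := by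
  by_contra hij
  have hsub : s ⊆ D i ∪ ⋃ l ∈ {l : Fin m | l ≠ i}, D l := by
    intro w _
    obtain ⟨l, hl⟩ := hcover w
    rcases eq_or_ne l i with rfl | hne
    · exact Or.inl hl
    · exact Or.inr (mem_biUnion hne hl)
  obtain ⟨w, -, hwi, hwl⟩ := hs (D i) (⋃ l ∈ {l : Fin m | l ≠ i}, D l) (hopen i)
    (isOpen_biUnion fun l _ => hopen l) hsub ⟨y, hy, hyi⟩
    ⟨z, hz, mem_biUnion (Ne.symm hij) hzj⟩
  obtain ⟨l, hl, hwl'⟩ := mem_iUnion₂.mp hwl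
  have : w ∈ D l ∩ D i := ⟨hwl', hwi⟩
  rw [hdisj l i hl] at this
  exact this

lemma aux_card_components (D : Fin m → Set Y) (hopen : ∀ i, IsOpen (D i))
    (hconn : ∀ i, IsPreconnected (D i)) (hne : ∀ i, (D i).Nonempty)
    (hdisj : ∀ i j, i ≠ j → D i ∩ D j = ∅) (hcover : ∀ y : Y, ∃ i, y ∈ D i) :
    Nat.card (ConnectedComponents Y) = m := by
  have hclosed : ∀ i, IsClosed (D i) := by
    intro i
    have : D i = (⋃ l ∈ {l : Fin m | l ≠ i}, D l)ᶜ := by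
      ext w
      simp only [mem_compl_iff, mem_iUnion, mem_setOf_eq, not_exists]
      constructor
      · intro hw l hl hwl
        have : w ∈ D l ∩ D i := ⟨hwl, hw⟩
        rw [hdisj l i hl] at this
        exact this
      · intro h
        obtain ⟨l, hl⟩ := hcover w
        rcases eq_or_ne l i with rfl | hne
        · exact hl
        · exact absurd hl (h l hne)
    rw [this]
    exact (isOpen_biUnion fun l _ => hopen l).isClosed_compl
  have hcomp : ∀ i, ∀ y ∈ D i, connectedComponent y = D i := by
    intro i y hy
    exact subset_antisymm ((IsClopen.connectedComponent_subset ⟨hclosed i, hopen i⟩ hy))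
      ((hconn i).subset_connectedComponent hy)
  have hbij : Function.Bijective (fun i : Fin m => (ConnectedComponents.mk (hne i).choose)) := by
    constructor
    · intro i j hij
      rw [ConnectedComponents.coe_eq_coe] at hij
      rw [hcomp i _ (hne i).choose_spec, hcomp j _ (hne j).choose_spec] at hij
      by_contra hne'
      have := hdisj i j hne'
      rw [hij, inter_self] at this
      exact (hne j).ne_empty this
    · intro c
      obtain ⟨y, rfl⟩ := ConnectedComponents.surjective_coe c
      obtain ⟨i, hi⟩ := hcover y
      refine ⟨i, ?_⟩
      rw [ConnectedComponents.coe_eq_coe, hcomp i _ (hne i).choose_spec, hcomp i _ hi]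
  have := Nat.card_eq_of_bijective _ hbij
  simpa using this.symm

lemma aux_card_ge (D : Fin m → Set Y) (hopen : ∀ i, IsOpen (D i))
    (hne : ∀ i, (D i).Nonempty)
    (hdisj : ∀ i j, i ≠ j → D i ∩ D j = ∅) (hcover : ∀ y : Y, ∃ i, y ∈ D i)
    [Finite (ConnectedComponents Y)] :
    m ≤ Nat.card (ConnectedComponents Y) := by
  have hinj : Function.Injective (fun i : Fin m => (ConnectedComponents.mk (hne i).choose)) := by
    intro i j hij
    rw [ConnectedComponents.coe_eq_coe] at hij
    exact aux_index_unique D hopen hdisj hcover isPreconnected_connectedComponent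
      (mem_connectedComponent) (hij ▸ mem_connectedComponent)
      (hne i).choose_spec (hne j).choose_spec
  simpa using Nat.card_le_card_of_injective _ hinj

end Aux

lemma aux_rank {n : ℕ} (hn : 2 ≤ n) : 1 < Module.rank ℝ (EuclideanSpace ℝ (Fin n)) := by
  rw [← Module.finrank_eq_rank, finrank_euclideanSpace, Fintype.card_fin]
  exact_mod_cast Nat.lt_of_lt_of_le one_lt_two hn

lemma aux_ann_preconn {n : ℕ} (hn : 2 ≤ n) (c : EuclideanSpace ℝ (Fin n)) {α : ℝ} (β : ℝ)
    (hα : 0 ≤ α) :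
    IsPreconnected {x : EuclideanSpace ℝ (Fin n) | α < dist x c ∧ dist x c < β} := by
  have hsph : IsPreconnected (sphere (0 : EuclideanSpace ℝ (Fin n)) 1) :=
    isPreconnected_sphere (aux_rank hn) 0 1
  have hprod : IsPreconnected ((Ioo α β) ×ˢ (sphere (0 : EuclideanSpace ℝ (Fin n)) 1)) :=
    isPreconnected_Ioo.prod hsph
  have hcont : Continuous (fun p : ℝ × EuclideanSpace ℝ (Fin n) => c + p.1 • p.2) :=
    continuous_const.add (continuous_fst.smul continuous_snd)
  have himg := hprod.image _ hcont.continuousOn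
  have heq : (fun p : ℝ × EuclideanSpace ℝ (Fin n) => c + p.1 • p.2) ''
      ((Ioo α β) ×ˢ (sphere (0 : EuclideanSpace ℝ (Fin n)) 1)) =
      {x : EuclideanSpace ℝ (Fin n) | α < dist x c ∧ dist x c < β} := by
    ext x
    constructor
    · rintro ⟨⟨t, v⟩, ⟨⟨ht1, ht2⟩, hv⟩, rfl⟩
      simp only [mem_sphere_iff_norm, sub_zero] at hv
      have : dist (c + t • v) c = t := by
        rw [dist_eq_norm, add_sub_cancel_left, norm_smul, hv, mul_one, Real.norm_eq_abs,
          abs_of_nonneg (hα.trans ht1.le)]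
      exact ⟨by rw [this]; exact ht1, by rw [this]; exact ht2⟩
    · rintro ⟨h1, h2⟩
      have ht : 0 < ‖x - c‖ := by rw [← dist_eq_norm]; exact lt_of_le_of_lt hα h1
      refine ⟨⟨‖x - c‖, ‖x - c‖⁻¹ • (x - c)⟩, ⟨⟨?_, ?_⟩, ?_⟩, ?_⟩
      · rwa [← dist_eq_norm]
      · rwa [← dist_eq_norm]
      · simp only [mem_sphere_iff_norm, sub_zero, norm_smul, norm_inv, Real.norm_eq_abs,
          abs_of_nonneg (norm_nonneg _)]
        field_simp
      · simp only [smul_smul]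
        rw [mul_inv_cancel₀ ht.ne', one_smul]
        abel
  rwa [heq] at himg

lemma aux_ann_nonempty {n : ℕ} (hn : 2 ≤ n) (c : EuclideanSpace ℝ (Fin n)) {α β : ℝ}
    (hαβ : α < β) (hβ : 0 < β) :
    {x : EuclideanSpace ℝ (Fin n) | α < dist x c ∧ dist x c < β}.Nonempty := by
  have hmax : max α 0 < β := max_lt hαβ hβ
  obtain ⟨r, hr1, hr2⟩ := exists_between hmax
  have hrα : α < r := lt_of_le_of_lt (le_max_left α 0) hr1
  have hr0 : 0 < r := lt_of_le_of_lt (le_max_right α 0) hr1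
  have hn' : 0 < n := by omega
  set u : EuclideanSpace ℝ (Fin n) := EuclideanSpace.single (⟨0, hn'⟩ : Fin n) (1 : ℝ) with hu
  have hnu : ‖u‖ = 1 := by rw [hu, EuclideanSpace.norm_single, norm_one]
  refine ⟨c + r • u, ?_, ?_⟩ <;>
  · have : dist (c + r • u) c = r := by
      rw [dist_eq_norm, add_sub_cancel_left, norm_smul, hnu, mul_one, Real.norm_eq_abs,
        abs_of_pos hr0]
    rw [this]
    first | exact hrα | exact hr2

section Geo
variable {n p : ℕ} (a : Fin p → EuclideanSpace ℝ (Fin n))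

/-- The p+1 pieces: p punctured balls around the aᵢ and one boundary annulus. -/
def CEdef (ε : ℝ) : Fin (p + 1) → Set (EuclideanSpace ℝ (Fin n)) :=
  Fin.snoc (fun j => {x | 0 < dist x (a j) ∧ dist x (a j) < ε})
    {x | 1 - ε < dist x 0 ∧ dist x 0 < 1}

/-- ε is small enough. -/
def GoodEps (ε : ℝ) : Prop :=
  0 < ε ∧ ε ≤ 1/2 ∧ (∀ i, 2*ε ≤ 1 - dist (a i) 0) ∧ ∀ i j, i ≠ j → 2*ε ≤ dist (a i) (a j)

lemma goodEps_mono {ε ε' : ℝ} (h : GoodEps a ε) (h0 : 0 < ε') (hle : ε' ≤ ε) :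
    GoodEps a ε' := by
  obtain ⟨-, h2, h3, h4⟩ := h
  exact ⟨h0, hle.trans h2, fun i => le_trans (by linarith) (h3 i),
    fun i j hij => le_trans (by linarith) (h4 i j hij)⟩

lemma goodEps_exists (ha : Function.Injective a)
    (haD : ∀ i, a i ∈ ball (0 : EuclideanSpace ℝ (Fin n)) 1) : ∃ ε, GoodEps a ε := by
  classical
  set s : Finset ℝ := insert (1/2)
    (((Finset.univ : Finset (Fin p)).image fun i => (1 - dist (a i) 0)/2) ∪
      (((Finset.univ : Finset (Fin p × Fin p)).filter fun ij => ij.1 ≠ ij.2).image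
        fun ij => dist (a ij.1) (a ij.2)/2)) with hs
  have hne : s.Nonempty := ⟨1/2, Finset.mem_insert_self _ _⟩
  set ε := s.min' hne with hε
  have hpos : 0 < ε := by
    rw [hε, Finset.lt_min'_iff]
    intro y hy
    rw [hs] at hy
    rcases Finset.mem_insert.mp hy with rfl | hy
    · norm_num
    rcases Finset.mem_union.mp hy with hy | hy
    · obtain ⟨i, -, rfl⟩ := Finset.mem_image.mp hy
      have := haD i
      rw [mem_ball] at this
      linarith
    · obtain ⟨ij, hij, rfl⟩ := Finset.mem_image.mp hy
      have hij' := (Finset.mem_filter.mp hij).2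
      have : a ij.1 ≠ a ij.2 := fun h => hij' (ha h)
      have := dist_pos.mpr this
      linarith
  refine ⟨ε, hpos, ?_, ?_, ?_⟩
  · exact Finset.min'_le s _ (Finset.mem_insert_self _ _)
  · intro i
    have : ε ≤ (1 - dist (a i) 0)/2 := Finset.min'_le s _
      (Finset.mem_insert_of_mem (Finset.mem_union_left _
        (Finset.mem_image.mpr ⟨i, Finset.mem_univ _, rfl⟩)))
    linarith
  · intro i j hij
    have : ε ≤ dist (a i) (a j)/2 := Finset.min'_le s _
      (Finset.mem_insert_of_mem (Finset.mem_union_right _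
        (Finset.mem_image.mpr ⟨(i, j), Finset.mem_filter.mpr ⟨Finset.mem_univ _, hij⟩, rfl⟩)))
    linarith

lemma CE_subset {ε : ℝ} (hε : GoodEps a ε) (i : Fin (p + 1)) :
    CEdef a ε i ⊆ ball (0 : EuclideanSpace ℝ (Fin n)) 1 \ Set.range a := by
  obtain ⟨h0, h12, hd, hsep⟩ := hε
  induction i using Fin.lastCases with
  | last =>
    intro x hx
    rw [CEdef, Fin.snoc_last] at hx
    obtain ⟨hx1, hx2⟩ := hx
    refine ⟨by rwa [mem_ball], ?_⟩
    rintro ⟨j, rfl⟩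
    have := hd j
    linarith
  | cast j =>
    intro x hx
    rw [CEdef, Fin.snoc_castSucc] at hx
    obtain ⟨hx1, hx2⟩ := hx
    have hdj := hd j
    constructor
    · rw [mem_ball]
      calc dist x 0 ≤ dist x (a j) + dist (a j) 0 := dist_triangle _ _ _
        _ < ε + (1 - 2*ε) := by linarith
        _ < 1 := by linarith
    · rintro ⟨l, rfl⟩
      rcases eq_or_ne l j with rfl | hlj
      · exact absurd rfl (dist_pos.mp hx1)
      · have h2ε := hsep l j hlj
        linarith

lemma CE_open {ε : ℝ} (i : Fin (p + 1)) : IsOpen (CEdef a ε i) := by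
  induction i using Fin.lastCases with
  | last =>
    rw [CEdef, Fin.snoc_last]
    exact (isOpen_lt continuous_const (continuous_id.dist continuous_const)).inter
      (isOpen_lt (continuous_id.dist continuous_const) continuous_const)
  | cast j =>
    rw [CEdef, Fin.snoc_castSucc]
    exact (isOpen_lt continuous_const (continuous_id.dist continuous_const)).inter
      (isOpen_lt (continuous_id.dist continuous_const) continuous_const)

end Geo

section Geo2
variable {n p : ℕ} (a : Fin p → EuclideanSpace ℝ (Fin n))

lemma CE_preconn (hn : 2 ≤ n) {ε : ℝ} (hε : GoodEps a ε) (i : Fin (p + 1)) :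
    IsPreconnected (CEdef a ε i) := by
  obtain ⟨h0, h12, -, -⟩ := hε
  induction i using Fin.lastCases with
  | last =>
    rw [CEdef, Fin.snoc_last]
    exact aux_ann_preconn hn 0 1 (by linarith)
  | cast j =>
    rw [CEdef, Fin.snoc_castSucc]
    exact aux_ann_preconn hn (a j) ε le_rfl

lemma CE_nonempty (hn : 2 ≤ n) {ε : ℝ} (hε : GoodEps a ε) (i : Fin (p + 1)) :
    (CEdef a ε i).Nonempty := by
  obtain ⟨h0, h12, -, -⟩ := hε
  induction i using Fin.lastCases with
  | last =>
    rw [CEdef, Fin.snoc_last]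
    exact aux_ann_nonempty hn 0 (by linarith) one_pos
  | cast j =>
    rw [CEdef, Fin.snoc_castSucc]
    exact aux_ann_nonempty hn (a j) h0 h0

lemma CE_mono {ε ε' : ℝ} (hle : ε' ≤ ε) (i : Fin (p + 1)) :
    CEdef a ε' i ⊆ CEdef a ε i := by
  induction i using Fin.lastCases with
  | last =>
    rw [CEdef, Fin.snoc_last, CEdef, Fin.snoc_last]
    exact fun x ⟨hx1, hx2⟩ => ⟨by linarith, hx2⟩
  | cast j =>
    rw [CEdef, Fin.snoc_castSucc, CEdef, Fin.snoc_castSucc]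
    exact fun x ⟨hx1, hx2⟩ => ⟨hx1, by linarith⟩

lemma CE_disjoint {ε : ℝ} (hε : GoodEps a ε) {i j : Fin (p + 1)} (hij : i ≠ j) :
    CEdef a ε i ∩ CEdef a ε j = ∅ := by
  obtain ⟨h0, h12, hd, hsep⟩ := hε
  have key : ∀ l : Fin p, CEdef a ε (Fin.castSucc l) ∩ CEdef a ε (Fin.last p) = ∅ := by
    intro l
    rw [CEdef, Fin.snoc_castSucc, Fin.snoc_last]
    ext x
    simp only [mem_inter_iff, mem_setOf_eq, mem_empty_iff_false, iff_false, not_and]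
    intro h1 h2 h3
    have hdl := hd l
    have := dist_triangle x (a l) 0
    linarith
  induction i using Fin.lastCases with
  | last =>
    induction j using Fin.lastCases with
    | last => exact absurd rfl hij
    | cast l => rw [inter_comm]; exact key l
  | cast l =>
    induction j using Fin.lastCases with
    | last => exact key l
    | cast l' =>
      have hll' : l ≠ l' := fun h => hij (by rw [h])
      rw [CEdef, Fin.snoc_castSucc, Fin.snoc_castSucc]
      ext x
      simp only [mem_inter_iff, mem_setOf_eq, mem_empty_iff_false, iff_false, not_and]
      rintro ⟨h1, h2⟩ h3 h4
      have := hsep l l' hll'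
      have := dist_triangle (a l) x (a l')
      rw [dist_comm (a l) x] at this
      linarith

lemma CE_compl_compact {ε : ℝ} (hε : GoodEps a ε) :
    IsCompact ((ball (0 : EuclideanSpace ℝ (Fin n)) 1 \ Set.range a) ∩ (⋃ i, CEdef a ε i)ᶜ) := by
  obtain ⟨h0, h12, hd, hsep⟩ := hε
  have heq : (ball (0 : EuclideanSpace ℝ (Fin n)) 1 \ Set.range a) ∩ (⋃ i, CEdef a ε i)ᶜ =
      closedBall (0 : EuclideanSpace ℝ (Fin n)) (1 - ε) ∩ ⋂ j, (ball (a j) ε)ᶜ := by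
      ext x
      constructor
      · rintro ⟨⟨hx1, hx2⟩, hx3⟩
        rw [mem_compl_iff, mem_iUnion] at hx3
        push_neg at hx3
        have hlast := hx3 (Fin.last p)
        rw [CEdef, Fin.snoc_last] at hlast
        simp only [mem_setOf_eq, not_and, not_lt] at hlast
        rw [mem_ball] at hx1
        constructor
        · rw [mem_closedBall]
          by_contra hc
          push_neg at hc
          exact absurd hx1 (not_lt.mpr (hlast hc))
        · rw [mem_iInter]
          intro j
          rw [mem_compl_iff, mem_ball]
          have hj := hx3 (Fin.castSucc j)
          rw [CEdef, Fin.snoc_castSucc] at hj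
          simp only [mem_setOf_eq, not_and, not_lt] at hj
          have hxne : x ≠ a j := fun h => hx2 ⟨j, h.symm⟩
          exact not_lt.mpr (hj (dist_pos.mpr hxne))
      · rintro ⟨hx1, hx2⟩
        rw [mem_closedBall] at hx1
        rw [mem_iInter] at hx2
        have hx2' : ∀ j, ε ≤ dist x (a j) := by
          intro j
          have := hx2 j
          rwa [mem_compl_iff, mem_ball, not_lt] at this
        refine ⟨⟨mem_ball.mpr (by linarith), ?_⟩, ?_⟩
        · rintro ⟨j, rfl⟩
          have := hx2' j
          rw [dist_self] at this
          linarith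
        · rw [mem_compl_iff, mem_iUnion]
          push_neg
          intro i
          induction i using Fin.lastCases with
          | last =>
            rw [CEdef, Fin.snoc_last]
            simp only [mem_setOf_eq, not_and, not_lt]
            intro h
            linarith
          | cast j =>
            rw [CEdef, Fin.snoc_castSucc]
            simp only [mem_setOf_eq, not_and, not_lt]
            intro h
            exact hx2' j
  rw [heq]
  exact (isCompact_closedBall _ _).of_isClosed_subset
    (isClosed_closedBall.inter (isClosed_iInter fun j => isOpen_ball.isClosed_compl))
    inter_subset_left

lemma CE_shrink {ε₀ : ℝ} (ha : Function.Injective a)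
    (hε₀ : GoodEps a ε₀) {K : Set (EuclideanSpace ℝ (Fin n))} (hK : IsCompact K)
    (hKX : K ⊆ ball (0 : EuclideanSpace ℝ (Fin n)) 1 \ Set.range a) :
    ∃ ε, GoodEps a ε ∧ ε ≤ ε₀ ∧ ∀ i, CEdef a ε i ∩ K = ∅ := by
  classical
  rcases K.eq_empty_or_nonempty with rfl | hKne
  · exact ⟨ε₀, hε₀, le_rfl, fun i => by simp⟩
  obtain ⟨x₀, hx₀K, hmax⟩ := hK.exists_isMaxOn hKne
    ((continuous_id.dist continuous_const).continuousOn :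
      ContinuousOn (fun x => dist x 0) K)
  have hx₀ : dist x₀ 0 < 1 := mem_ball.mp (hKX hx₀K).1
  set t : Finset ℝ := insert (1 - dist x₀ 0)
    ((Finset.univ : Finset (Fin p)).image fun i => infDist (a i) K) with ht
  have htne : t.Nonempty := ⟨_, Finset.mem_insert_self _ _⟩
  set μ := t.min' htne with hμ
  have hμpos : 0 < μ := by
    rw [hμ, Finset.lt_min'_iff]
    intro y hy
    rw [ht] at hy
    rcases Finset.mem_insert.mp hy with rfl | hy
    · linarith
    · obtain ⟨i, -, rfl⟩ := Finset.mem_image.mp hy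
      have hnotK : a i ∉ K := fun h => (hKX h).2 ⟨i, rfl⟩
      exact (hK.isClosed.notMem_iff_infDist_pos hKne).mp hnotK
  set ε := min ε₀ (μ/2) with hε
  have hεpos : 0 < ε := lt_min hε₀.1 (by linarith)
  have hεε₀ : ε ≤ ε₀ := min_le_left _ _
  refine ⟨ε, goodEps_mono a hε₀ hεpos hεε₀, hεε₀, ?_⟩
  have hεμ : ε ≤ μ/2 := min_le_right _ _
  have hμ1 : μ ≤ 1 - dist x₀ 0 := Finset.min'_le t _ (Finset.mem_insert_self _ _)
  have hμ2 : ∀ i, μ ≤ infDist (a i) K :=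
    fun i => Finset.min'_le t _ (Finset.mem_insert_of_mem
      (Finset.mem_image.mpr ⟨i, Finset.mem_univ _, rfl⟩))
  intro i
  induction i using Fin.lastCases with
  | last =>
    rw [CEdef, Fin.snoc_last]
    ext x
    simp only [mem_inter_iff, mem_setOf_eq, mem_empty_iff_false, iff_false, not_and]
    rintro ⟨h1, h2⟩ hxK
    have := hmax hxK
    simp only [id, mem_setOf_eq] at this
    linarith
  | cast j =>
    rw [CEdef, Fin.snoc_castSucc]
    ext x
    simp only [mem_inter_iff, mem_setOf_eq, mem_empty_iff_false, iff_false, not_and]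
    rintro ⟨h1, h2⟩ hxK
    have hinf : infDist (a j) K ≤ dist (a j) x := infDist_le_dist_of_mem hxK
    have := hμ2 j
    rw [dist_comm (a j) x] at hinf
    linarith

end Geo2

section Assemble
open Topology
variable {n p : ℕ} {a : Fin p → EuclideanSpace ℝ (Fin n)}

lemma buildQ (hn : 2 ≤ n) {ε : ℝ} (hε : GoodEps a ε) :
    IsCompact ((Subtype.val ⁻¹' (⋃ i, CEdef a ε i) :
      Set ↥(ball (0 : EuclideanSpace ℝ (Fin n)) 1 \ Set.range a))ᶜ) ∧
    Nat.card (ConnectedComponents ↥(Subtype.val ⁻¹' (⋃ i, CEdef a ε i) :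
      Set ↥(ball (0 : EuclideanSpace ℝ (Fin n)) 1 \ Set.range a))) = p + 1 := by
  set Xs : Set (EuclideanSpace ℝ (Fin n)) := ball 0 1 \ Set.range a with hXs
  set S : Set (EuclideanSpace ℝ (Fin n)) := ⋃ i, CEdef a ε i with hS
  have hSX : S ⊆ Xs := iUnion_subset fun i => CE_subset a hε i
  constructor
  · rw [← preimage_compl, Subtype.isCompact_iff, Subtype.image_preimage_coe]
    have : Xs ∩ Sᶜ = Xs ∩ (⋃ i, CEdef a ε i)ᶜ := rfl
    rw [this]
    exact CE_compl_compact a hε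
  · set Q : Set ↥Xs := Subtype.val ⁻¹' S with hQ
    set g : ↥Q → EuclideanSpace ℝ (Fin n) := fun q => ((q : ↥Xs) : EuclideanSpace ℝ (Fin n))
      with hg
    have hgc : Continuous g := continuous_subtype_val.comp continuous_subtype_val
    have hgi : IsInducing g := IsInducing.subtypeVal.comp IsInducing.subtypeVal
    have hrange : Set.range g = S := by
      ext x
      constructor
      · rintro ⟨⟨⟨y, hy⟩, hq⟩, rfl⟩
        exact hq
      · intro hx
        exact ⟨⟨⟨x, hSX hx⟩, hx⟩, rfl⟩
    apply aux_card_components (fun i => g ⁻¹' CEdef a ε i)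
    · exact fun i => (CE_open a i).preimage hgc
    · intro i
      rw [← hgi.isPreconnected_image]
      have : g '' (g ⁻¹' CEdef a ε i) = CEdef a ε i := by
        rw [image_preimage_eq_inter_range, hrange,
          inter_eq_self_of_subset_left (subset_iUnion (fun i => CEdef a ε i) i)]
      rw [this]
      exact CE_preconn a hn hε i
    · intro i
      obtain ⟨x, hx⟩ := CE_nonempty a hn hε i
      have hxS : x ∈ S := mem_iUnion.mpr ⟨i, hx⟩
      exact ⟨⟨⟨x, hSX hxS⟩, hxS⟩, hx⟩
    · intro i j hij
      have : g ⁻¹' CEdef a ε i ∩ g ⁻¹' CEdef a ε j = g ⁻¹' (CEdef a ε i ∩ CEdef a ε j) := rfl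
      rw [this, CE_disjoint a hε hij, preimage_empty]
    · intro q
      have hq : g q ∈ ⋃ i, CEdef a ε i := q.2
      obtain ⟨i, hi⟩ := mem_iUnion.mp hq
      exact ⟨i, hi⟩

end Assemble

/-- A space is m-disconnected near infinity if every punctured neighborhood of
the point at infinity (set with compact complement) contains one with exactly
m+1 connected components, and m is minimal with this property. -/
def MDisconnectedNearInfinity (X : Type*) [TopologicalSpace X] (m : ℕ) : Prop :=
  (∀ P : Set X, IsCompact Pᶜ → ∃ Q : Set X, Q ⊆ P ∧ IsCompact Qᶜ ∧
      Nat.card (ConnectedComponents Q) = m + 1) ∧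
  ∀ k : ℕ, k < m → ¬ (∀ P : Set X, IsCompact Pᶜ → ∃ Q : Set X, Q ⊆ P ∧ IsCompact Qᶜ ∧
      Nat.card (ConnectedComponents Q) = k + 1)

/-- The open unit ball of ℝⁿ (n ≥ 2) with p distinct points removed is
p-disconnected near infinity. -/
theorem stmt_14 (n : ℕ) (hn : 2 ≤ n) (p : ℕ) (a : Fin p → EuclideanSpace ℝ (Fin n))
    (ha : Function.Injective a) (haD : ∀ i, a i ∈ Metric.ball (0 : EuclideanSpace ℝ (Fin n)) 1) :
    MDisconnectedNearInfinity
      ((Metric.ball (0 : EuclideanSpace ℝ (Fin n)) 1 \ Set.range a : Set (EuclideanSpace ℝ (Fin n)))) p := by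
  obtain ⟨ε₀, hε₀⟩ := goodEps_exists a ha haD
  constructor
  · intro P hP
    set K : Set (EuclideanSpace ℝ (Fin n)) := Subtype.val '' Pᶜ with hKdef
    have hK : IsCompact K := Subtype.isCompact_iff.mp hP
    have hKX : K ⊆ ball (0 : EuclideanSpace ℝ (Fin n)) 1 \ Set.range a := by
      rintro x ⟨q, -, rfl⟩
      exact q.2
    obtain ⟨ε, hε, hεε₀, hdisjK⟩ := CE_shrink a ha hε₀ hK hKX
    refine ⟨Subtype.val ⁻¹' (⋃ i, CEdef a ε i), ?_, (buildQ hn hε).1, (buildQ hn hε).2⟩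
    intro q hq
    by_contra hqP
    have hqK : (q : EuclideanSpace ℝ (Fin n)) ∈ K := ⟨q, hqP, rfl⟩
    obtain ⟨i, hi⟩ := mem_iUnion.mp hq
    have : (q : EuclideanSpace ℝ (Fin n)) ∈ CEdef a ε i ∩ K := ⟨hi, hqK⟩
    rw [hdisjK i] at this
    exact this
  · intro k hk hall
    obtain ⟨Q, hQP, hQc, hcard⟩ := hall (Subtype.val ⁻¹' (⋃ i, CEdef a ε₀ i)) (buildQ hn hε₀).1
    set K : Set (EuclideanSpace ℝ (Fin n)) := Subtype.val '' Qᶜ with hKdef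
    have hK : IsCompact K := Subtype.isCompact_iff.mp hQc
    have hKX : K ⊆ ball (0 : EuclideanSpace ℝ (Fin n)) 1 \ Set.range a := by
      rintro x ⟨q, -, rfl⟩
      exact q.2
    obtain ⟨ε, hε, hεε₀, hdisjK⟩ := CE_shrink a ha hε₀ hK hKX
    have hfin : Finite (ConnectedComponents ↥Q) :=
      Nat.finite_of_card_ne_zero (by rw [hcard]; omega)
    set g : ↥Q → EuclideanSpace ℝ (Fin n) :=
      fun q => ((q : ↥(ball (0 : EuclideanSpace ℝ (Fin n)) 1 \ Set.range a)) :
        EuclideanSpace ℝ (Fin n)) with hg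
    have hgc : Continuous g := continuous_subtype_val.comp continuous_subtype_val
    have hge : p + 1 ≤ Nat.card (ConnectedComponents ↥Q) := by
      apply aux_card_ge (fun i => g ⁻¹' CEdef a ε₀ i)
      · exact fun i => (CE_open a i).preimage hgc
      · intro i
        obtain ⟨x, hx⟩ := CE_nonempty a hn hε i
        have hxX : x ∈ ball (0 : EuclideanSpace ℝ (Fin n)) 1 \ Set.range a := CE_subset a hε i hx
        have hxK : x ∉ K := by
          intro hxK
          have : x ∈ CEdef a ε i ∩ K := ⟨hx, hxK⟩
          rw [hdisjK i] at this
          exact this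
        have hxQ : (⟨x, hxX⟩ : ↥(ball (0 : EuclideanSpace ℝ (Fin n)) 1 \ Set.range a)) ∈ Q := by
          by_contra hc
          exact hxK ⟨⟨x, hxX⟩, hc, rfl⟩
        exact ⟨⟨⟨x, hxX⟩, hxQ⟩, CE_mono a hεε₀ i hx⟩
      · intro i j hij
        have : g ⁻¹' CEdef a ε₀ i ∩ g ⁻¹' CEdef a ε₀ j =
            g ⁻¹' (CEdef a ε₀ i ∩ CEdef a ε₀ j) := rfl
        rw [this, CE_disjoint a hε₀ hij, preimage_empty]
      · intro q
        have hq : g q ∈ ⋃ i, CEdef a ε₀ i := hQP q.2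
        obtain ⟨i, hi⟩ := mem_iUnion.mp hq
        exact ⟨i, hi⟩
    rw [hcard] at hge
    omega
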